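/- Every normal binary sequence is finite-state incompressible: if α = a₀a₁a₂… is normal, then for every automatic description mode R, liminf_{n→∞} K_R(a₀…a_{n−1})/n ≥ 1. -/

import Mathlib

/-- A finite automaton: a finite directed graph whose edges are labeled by pairs
of an optional input letter and an optional output letter (`none` = ε). -/
structure Automaton (A B : Type*) where
  n : ℕ
  edges : List (Fin n × (Option A × Option B) × Fin n)

namespace Automaton

/-- `Reads G s t u v` : along some directed path from `s` to `t` one reads the
pair of strings `(u, v)` (concatenating labels, ε contributing nothing). -/
inductive Reads {A B : Type*} (G : Automaton A B) :
    Fin G.n → Fin G.n → List A → List B → Prop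
  | nil (s : Fin G.n) : Reads G s s [] []
  | step {s t r : Fin G.n} {a : Option A} {b : Option B} {u : List A} {v : List B} :
      (s, (a, b), t) ∈ G.edges → Reads G t r u v →
      Reads G s r (a.toList ++ u) (b.toList ++ v)

/-- The relation realized by the automaton: pairs readable along some directed
path, with arbitrary start and end states. -/
def Rel {A B : Type*} (G : Automaton A B) (u : List A) (v : List B) : Prop :=
  ∃ s t : Fin G.n, G.Reads s t u v

end Automaton

/-- A relation is automatic if it is realized by some automaton. -/
def IsAutomatic {A B : Type*} (R : List A → List B → Prop) : Prop :=
  ∃ G : Automaton A B, ∀ u v, R u v ↔ G.Rel u v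

/-- `R` is O(1)-valued: some constant bounds the number of strings related to any `p`. -/
def BoundedValued {A B : Type*} (R : List A → List B → Prop) : Prop :=
  ∃ c : ℕ, ∀ p, {x | R p x}.Finite ∧ {x | R p x}.ncard ≤ c

/-- An automatic description mode: an O(1)-valued automatic relation on binary strings. -/
def IsDescriptionMode (R : List Bool → List Bool → Prop) : Prop :=
  IsAutomatic R ∧ BoundedValued R

/-- Automatic Kolmogorov complexity: minimal length of a description of `x`
(`⊤` if there is none). -/
noncomputable def autK (R : List Bool → List Bool → Prop) (x : List Bool) : ℕ∞ :=
  sInf {n : ℕ∞ | ∃ p : List Bool, R p x ∧ n = p.length}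

/-- Number of aligned `k`-blocks among the first `N` blocks of `α` equal to `r`. -/
def alignedCount (α : ℕ → Bool) (k : ℕ) (r : List Bool) (N : ℕ) : ℕ :=
  ((Finset.range N).filter (fun i => List.ofFn (fun j : Fin k => α (i * k + j)) = r)).card

/-- A binary sequence is normal: every `k`-bit string occurs among the aligned
`k`-bit blocks with limit frequency `2⁻ᵏ`, for every `k ≥ 1`. -/
def IsNormal (α : ℕ → Bool) : Prop :=
  ∀ k : ℕ, 1 ≤ k → ∀ r : List Bool, r.length = k →
    Filter.Tendsto (fun N => (alignedCount α k r N : ℝ) / (N : ℝ))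
      Filter.atTop (nhds ((2 : ℝ)⁻¹ ^ k))

/-- The length-`n` prefix of the sequence `α`. -/
def prefixOf (α : ℕ → Bool) (n : ℕ) : List Bool := List.ofFn fun i : Fin n => α i

/-! ### Auxiliary lemmas -/

theorem reads_split {A B : Type*} {G : Automaton A B} {s t : Fin G.n} {u : List A} {v : List B}
    (h : G.Reads s t u v) : ∀ v₁ v₂ : List B, v = v₁ ++ v₂ →
    ∃ (m : Fin G.n) (u₁ u₂ : List A), u = u₁ ++ u₂ ∧ G.Reads s m u₁ v₁ ∧ G.Reads m t u₂ v₂ := by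
  induction h with
  | nil s =>
    intro v₁ v₂ hv
    rcases (List.append_eq_nil_iff.mp hv.symm) with ⟨rfl, rfl⟩
    exact ⟨s, [], [], rfl, .nil s, .nil s⟩
  | @step s t r a b u v he h' ih =>
    intro v₁ v₂ hv
    cases v₁ with
    | nil =>
      exact ⟨s, [], a.toList ++ u, rfl, .nil s,
        by rw [List.nil_append] at hv; rw [← hv]; exact .step he h'⟩
    | cons c v₁' =>
      cases b with
      | none =>
        simp only [Option.toList, List.nil_append] at hv
        obtain ⟨m, u₁, u₂, rfl, h1, h2⟩ := ih (c :: v₁') v₂ hv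
        refine ⟨m, a.toList ++ u₁, u₂, by simp [List.append_assoc], ?_, h2⟩
        have := Automaton.Reads.step (b := (none : Option B)) he h1
        simpa using this
      | some c' =>
        simp only [Option.toList, List.cons_append, List.singleton_append, List.cons.injEq] at hv
        obtain ⟨rfl, hv⟩ := hv
        obtain ⟨m, u₁, u₂, rfl, h1, h2⟩ := ih v₁' v₂ hv
        refine ⟨m, a.toList ++ u₁, u₂, by simp [List.append_assoc], ?_, h2⟩
        have := Automaton.Reads.step (b := some c') he h1
        simpa using this

theorem autK_superadd {R : List Bool → List Bool → Prop} {G : Automaton Bool Bool}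
    (hG : ∀ u v, R u v ↔ G.Rel u v) (x₁ x₂ : List Bool) :
    autK R x₁ + autK R x₂ ≤ autK R (x₁ ++ x₂) := by
  apply le_sInf
  rintro n ⟨p, hp, rfl⟩
  obtain ⟨st, tt, hreads⟩ := (hG p (x₁ ++ x₂)).mp hp
  obtain ⟨m, p₁, p₂, rfl, h1, h2⟩ := reads_split hreads x₁ x₂ rfl
  have hx1 : autK R x₁ ≤ (p₁.length : ℕ∞) :=
    sInf_le ⟨p₁, (hG p₁ x₁).mpr ⟨st, m, h1⟩, rfl⟩
  have hx2 : autK R x₂ ≤ (p₂.length : ℕ∞) :=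
    sInf_le ⟨p₂, (hG p₂ x₂).mpr ⟨m, tt, h2⟩, rfl⟩
  calc autK R x₁ + autK R x₂ ≤ (p₁.length : ℕ∞) + (p₂.length : ℕ∞) := add_le_add hx1 hx2
    _ = ((p₁ ++ p₂).length : ℕ∞) := by rw [List.length_append]; push_cast; ring

theorem ofFn_nat_eq_map (m : ℕ) (β : ℕ → Bool) :
    List.ofFn (fun i : Fin m => β i) = (List.range m).map β := by
  apply List.ext_getElem <;> simp

theorem prefix_decomp (α : ℕ → Bool) (k n : ℕ) (h : k ≤ n) :
    prefixOf α n =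
      (List.ofFn fun j : Fin k => α (0 * k + j)) ++ prefixOf (fun i => α (k + i)) (n - k) := by
  unfold prefixOf
  rw [ofFn_nat_eq_map n α, ofFn_nat_eq_map (n - k) (fun i => α (k + i))]
  have : (List.ofFn fun j : Fin k => α (0 * k + j)) = (List.range k).map α := by
    rw [← ofFn_nat_eq_map]; congr 1; funext j; congr 1; omega
  rw [this, show n = k + (n - k) by omega, List.range_add, List.map_append, List.map_map]
  simp [Function.comp]

theorem sum_blocks_le {R : List Bool → List Bool → Prop}
    (hsup : ∀ x₁ x₂, autK R x₁ + autK R x₂ ≤ autK R (x₁ ++ x₂)) (k : ℕ) :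
    ∀ (N : ℕ) (β : ℕ → Bool) (n : ℕ), N * k ≤ n →
      ∑ i ∈ Finset.range N, autK R (List.ofFn fun j : Fin k => β (i * k + j)) ≤
        autK R (prefixOf β n) := by
  intro N
  induction N with
  | zero => intro β n _; simp
  | succ N ih =>
    intro β n hn
    have hkn : k ≤ n := le_trans (by nlinarith) hn
    rw [Finset.sum_range_succ']
    have hblk : ∀ i : ℕ, (List.ofFn fun j : Fin k => β ((i + 1) * k + j)) =
        (List.ofFn fun j : Fin k => (fun m => β (k + m)) (i * k + j)) := by
      intro i; congr 1; funext j; congr 1; ring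
    calc (∑ i ∈ Finset.range N, autK R (List.ofFn fun j : Fin k => β ((i + 1) * k + j))) +
          autK R (List.ofFn fun j : Fin k => β (0 * k + j))
        = autK R (List.ofFn fun j : Fin k => β (0 * k + j)) +
          ∑ i ∈ Finset.range N,
            autK R (List.ofFn fun j : Fin k => (fun m => β (k + m)) (i * k + j)) := by
          rw [add_comm]; congr 1; exact Finset.sum_congr rfl fun i _ => by rw [hblk]
      _ ≤ autK R (List.ofFn fun j : Fin k => β (0 * k + j)) +
            autK R (prefixOf (fun m => β (k + m)) (n - k)) :=
          add_le_add le_rfl (ih (fun m => β (k + m)) (n - k)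
            (by simp only [Nat.succ_mul] at hn; omega))
      _ ≤ autK R ((List.ofFn fun j : Fin k => β (0 * k + j)) ++
            prefixOf (fun m => β (k + m)) (n - k)) := hsup _ _
      _ = autK R (prefixOf β n) := by rw [← prefix_decomp β k n hkn]

open Finset in
theorem bad_card_le {R : List Bool → List Bool → Prop} {c : ℕ}
    (hc : ∀ p, {x | R p x}.Finite ∧ {x | R p x}.ncard ≤ c) (t : ℕ)
    (V : Finset (List Bool)) (hV : DecidablePred fun x => autK R x < (t : ℕ∞)) :
    (V.filter fun x => autK R x < (t : ℕ∞)).card ≤ 2 ^ t * c := by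
  classical
  have geom : ∀ m : ℕ, ∑ j ∈ range m, 2 ^ j ≤ 2 ^ m := by
    intro m
    induction m with
    | zero => simp
    | succ m ihm => rw [Finset.sum_range_succ, pow_succ]; omega
  set P : Finset (List Bool) :=
    (range t).biUnion (fun j => (univ : Finset (Fin j → Bool)).image List.ofFn) with hP
  have hPcard : P.card ≤ 2 ^ t := by
    calc P.card ≤ ∑ j ∈ range t, ((univ : Finset (Fin j → Bool)).image List.ofFn).card :=
          card_biUnion_le
      _ ≤ ∑ j ∈ range t, 2 ^ j := by
          apply Finset.sum_le_sum; intro j _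
          calc ((univ : Finset (Fin j → Bool)).image List.ofFn).card
              ≤ (univ : Finset (Fin j → Bool)).card := card_image_le
            _ = 2 ^ j := by simp
      _ ≤ 2 ^ t := geom t
  have hsub : (V.filter fun x => autK R x < (t : ℕ∞)) ⊆
      P.biUnion (fun p => (hc p).1.toFinset) := by
    intro x hx
    rw [mem_filter] at hx
    obtain ⟨-, hx⟩ := hx
    rw [autK, sInf_lt_iff] at hx
    obtain ⟨m, ⟨p, hpx, rfl⟩, hm⟩ := hx
    rw [mem_biUnion]
    refine ⟨p, ?_, by simp [hpx]⟩
    rw [hP, mem_biUnion]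
    have hlen : p.length < t := by exact_mod_cast hm
    exact ⟨p.length, mem_range.mpr hlen, mem_image.mpr ⟨p.get, mem_univ _, List.ofFn_get p⟩⟩
  calc (V.filter fun x => autK R x < (t : ℕ∞)).card
      ≤ (P.biUnion (fun p => (hc p).1.toFinset)).card := card_le_card hsub
    _ ≤ ∑ p ∈ P, (hc p).1.toFinset.card := card_biUnion_le
    _ ≤ ∑ p ∈ P, c := by
        apply Finset.sum_le_sum; intro p _
        rw [← Set.ncard_eq_toFinset_card _ (hc p).1]
        exact (hc p).2
    _ = P.card * c := by rw [Finset.sum_const, smul_eq_mul]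
    _ ≤ 2 ^ t * c := Nat.mul_le_mul_right c hPcard

theorem key_ineq (a b c : ℕ) (hab : a < b) :
    let s := 4 * b * (c + 1); let t := s * (4 * b - 1); let k := s + t;
    (a * k + 1) * (4 * b) < b * t * (4 * b - 1) := by
  intro s t k
  have hb : 1 ≤ b := by omega
  have hw : 4 * b - 1 + 1 = 4 * b := by omega
  set w := 4 * b - 1 with hwdef
  have hw3 : 3 ≤ w := by omega
  have hs4 : 4 ≤ s := by simp only [s]; nlinarith
  have ha : 4 * a + 3 ≤ w := by omega
  have hbw : 4 * b = w + 1 := by omega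
  have key : ∀ A S W : ℤ, 0 ≤ A → 4 ≤ S → 4*A+3 ≤ W → 0 ≤ W →
      (A*(S+S*W)+1)*(W+1) < (A+1)*(S*W)*W := by
    intro A S W hA hS hW hW0
    nlinarith [mul_nonneg (mul_nonneg (by linarith : (0:ℤ) ≤ W-3-4*A) (by linarith : (0:ℤ) ≤ S))
        (by nlinarith : (0:ℤ) ≤ 2*W+1),
      mul_nonneg (by linarith : (0:ℤ) ≤ S-4) (by nlinarith : (0:ℤ) ≤ 2*W^2+5*W+3)]
  have hblow : (a + 1) * (s * w) * w ≤ b * (s * w) * w := by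
    apply Nat.mul_le_mul_right; apply Nat.mul_le_mul_right; omega
  show (a * (s + s * w) + 1) * (4 * b) < b * (s * w) * w
  rw [hbw]
  apply lt_of_lt_of_le _ hblow
  exact_mod_cast key a s w (by positivity) (by exact_mod_cast hs4) (by exact_mod_cast ha)
    (by positivity)

open Finset Filter in
theorem normal_incompressible (α : ℕ → Bool) (hα : IsNormal α)
    (R : List Bool → List Bool → Prop) (hR : IsDescriptionMode R) :
    ∀ a b : ℕ, a < b →
      ∀ᶠ n : ℕ in Filter.atTop, (a * n : ℕ∞) ≤ (b : ℕ∞) * autK R (prefixOf α n) := by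
  classical
  obtain ⟨⟨G, hG⟩, ⟨c, hc⟩⟩ := hR
  intro a b hab
  have hsup : ∀ x₁ x₂, autK R x₁ + autK R x₂ ≤ autK R (x₁ ++ x₂) := autK_superadd hG
  have hb : 1 ≤ b := by omega
  set s : ℕ := 4 * b * (c + 1) with hs_def
  set t : ℕ := s * (4 * b - 1) with ht_def
  set k : ℕ := s + t with hk_def
  have hs4 : 4 ≤ s := by simp only [hs_def]; nlinarith
  have ht1 : 1 ≤ t := Nat.mul_pos (by omega) (by omega)
  have hk1 : 1 ≤ k := by omega
  -- good and bad strings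
  set V : Finset (List Bool) := (univ : Finset (Fin k → Bool)).image List.ofFn with hV_def
  have hVcard : V.card = 2 ^ k := by
    rw [hV_def, Finset.card_image_of_injective _ List.ofFn_injective]; simp
  set Gs : Finset (List Bool) := V.filter (fun x => ¬ autK R x < (t : ℕ∞)) with hGs_def
  have hbad : (V.filter fun x => autK R x < (t : ℕ∞)).card ≤ 2 ^ t * c :=
    bad_card_le hc t V _
  have hsplit : (V.filter fun x => autK R x < (t : ℕ∞)).card + Gs.card = 2 ^ k := by
    rw [hGs_def, ← hVcard]
    exact Finset.card_filter_add_card_filter_not _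
  -- 4*b * bad ≤ 2^k
  have hbad2 : 4 * b * (V.filter fun x => autK R x < (t : ℕ∞)).card ≤ 2 ^ k := by
    calc 4 * b * (V.filter fun x => autK R x < (t : ℕ∞)).card
        ≤ 4 * b * (2 ^ t * c) := Nat.mul_le_mul_left _ hbad
      _ = (4 * b * c) * 2 ^ t := by ring
      _ ≤ 2 ^ s * 2 ^ t := by
          apply Nat.mul_le_mul_right
          calc 4 * b * c ≤ s := by simp only [hs_def]; nlinarith
            _ ≤ 2 ^ s := Nat.le_of_lt (Nat.lt_two_pow_self)
      _ = 2 ^ k := by rw [hk_def, pow_add]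
  have hGcard : (4 * b - 1) * 2 ^ k ≤ 4 * b * Gs.card := by
    rw [Nat.sub_mul, one_mul, Nat.sub_le_iff_le_add]
    calc 4 * b * 2 ^ k = 4 * b * ((V.filter fun x => autK R x < (t : ℕ∞)).card + Gs.card) := by
          rw [hsplit]
      _ = 4 * b * (V.filter fun x => autK R x < (t : ℕ∞)).card + 4 * b * Gs.card := by ring
      _ ≤ 2 ^ k + 4 * b * Gs.card := by omega
      _ = 4 * b * Gs.card + 2 ^ k := by ring
  -- key counting inequality
  have hkey2 : (a * k + 1) * 2 ^ k < b * t * Gs.card := by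
    have hkey := key_ineq a b c hab
    simp only [← hs_def, ← ht_def, ← hk_def] at hkey
    have h1 : (a * k + 1) * 2 ^ k * (4 * b) < b * t * Gs.card * (4 * b) := by
      calc (a * k + 1) * 2 ^ k * (4 * b) = (a * k + 1) * (4 * b) * 2 ^ k := by ring
        _ < b * t * (4 * b - 1) * 2 ^ k := by
            exact (Nat.mul_lt_mul_right (by positivity)).mpr hkey
        _ = b * t * ((4 * b - 1) * 2 ^ k) := by ring
        _ ≤ b * t * (4 * b * Gs.card) := Nat.mul_le_mul_left _ hGcard
        _ = b * t * Gs.card * (4 * b) := by ring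
    exact Nat.lt_of_mul_lt_mul_right h1
  -- block values
  have hlenGs : ∀ g ∈ Gs, g.length = k := by
    intro g hg
    rw [hGs_def, mem_filter] at hg
    obtain ⟨hgV, -⟩ := hg
    rw [hV_def, mem_image] at hgV
    obtain ⟨f, -, rfl⟩ := hgV
    simp
  -- normality: good-count frequency
  have htend : Tendsto (fun N => ((∑ g ∈ Gs, alignedCount α k g N : ℕ) : ℝ) / (N : ℝ))
      atTop (nhds ((Gs.card : ℝ) * (2 : ℝ)⁻¹ ^ k)) := by
    have h1 : Tendsto (fun N => ∑ g ∈ Gs, ((alignedCount α k g N : ℝ) / (N : ℝ)))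
        atTop (nhds (∑ _g ∈ Gs, (2 : ℝ)⁻¹ ^ k)) :=
      tendsto_finset_sum _ (fun g hg => hα k hk1 g (hlenGs g hg))
    simp only [Finset.sum_const, nsmul_eq_mul] at h1
    convert h1 using 2 with N
    rw [Nat.cast_sum, Finset.sum_div]
  have hreal : ((a * k + 1 : ℕ) : ℝ) < ((b * t : ℕ) : ℝ) * ((Gs.card : ℝ) * (2 : ℝ)⁻¹ ^ k) := by
    have h2k : (0 : ℝ) < 2 ^ k := by positivity
    have hcast : ((a * k + 1 : ℕ) : ℝ) * 2 ^ k < ((b * t : ℕ) : ℝ) * (Gs.card : ℝ) := by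
      exact_mod_cast hkey2
    rw [inv_pow, ← div_eq_mul_inv, ← mul_div_assoc]
    exact (lt_div_iff₀ h2k).mpr hcast
  have hev1 : ∀ᶠ N in atTop, ((a * k + 1 : ℕ) : ℝ) <
      ((b * t : ℕ) : ℝ) * (((∑ g ∈ Gs, alignedCount α k g N : ℕ) : ℝ) / (N : ℝ)) := by
    have h2 := htend.const_mul ((b * t : ℕ) : ℝ)
    exact h2.eventually (eventually_gt_nhds hreal)
  -- per-N natural inequality
  have hevP : ∀ᶠ N in atTop, a * k * (N + 1) ≤ b * t * (∑ g ∈ Gs, alignedCount α k g N) := by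
    filter_upwards [hev1, eventually_ge_atTop (a * k + 1)] with N h1 h2
    have hN0 : (0 : ℝ) < (N : ℝ) := by
      have : 1 ≤ N := by omega
      exact_mod_cast Nat.lt_of_lt_of_le Nat.zero_lt_one this
    have h3 : ((a * k + 1 : ℕ) : ℝ) * (N : ℝ) <
        ((b * t : ℕ) : ℝ) * ((∑ g ∈ Gs, alignedCount α k g N : ℕ) : ℝ) := by
      have h4 := mul_lt_mul_of_pos_right h1 hN0
      rwa [mul_assoc, div_mul_cancel₀ _ (ne_of_gt hN0)] at h4
    have h5 : (a * k + 1) * N ≤ b * t * (∑ g ∈ Gs, alignedCount α k g N) := by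
      exact_mod_cast h3.le
    calc a * k * (N + 1) = a * k * N + a * k := by ring
      _ ≤ a * k * N + N := by omega
      _ = (a * k + 1) * N := by ring
      _ ≤ _ := h5
  obtain ⟨N₀, hN₀⟩ := eventually_atTop.mp hevP
  rw [eventually_atTop]
  refine ⟨k * N₀, fun n hn => ?_⟩
  set N : ℕ := n / k with hN_def
  have hkpos : 0 < k := hk1
  have hNk : N * k ≤ n := Nat.div_mul_le_self n k
  have hNge : N₀ ≤ N := (Nat.le_div_iff_mul_le hkpos).mpr (by rw [mul_comm]; exact hn)
  have hnlt : n < k * (N + 1) := by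
    have h1 : k * N + n % k = n := Nat.div_add_mod n k
    have h2 : n % k < k := Nat.mod_lt n hkpos
    calc n = k * N + n % k := h1.symm
      _ < k * N + k := by omega
      _ = k * (N + 1) := by ring
  -- good block indices
  set T : Finset ℕ := (range N).filter
      (fun i => (List.ofFn fun j : Fin k => α (i * k + j)) ∈ Gs) with hT_def
  have hTcard : T.card = ∑ g ∈ Gs, alignedCount α k g N := by
    rw [hT_def]
    rw [Finset.card_eq_sum_card_fiberwise
      (f := fun i => List.ofFn fun j : Fin k => α (i * k + j)) (t := Gs)
      (s := (range N).filter (fun i => (List.ofFn fun j : Fin k => α (i * k + j)) ∈ Gs))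
      (fun i hi => (mem_filter.mp hi).2)]
    apply Finset.sum_congr rfl
    intro g hg
    rw [alignedCount, Finset.filter_filter]
    congr 1
    apply Finset.filter_congr
    intro i _
    constructor
    · rintro ⟨-, h⟩; exact h
    · intro h; exact ⟨by rw [h]; exact hg, h⟩
  have hTle : ∀ i ∈ T, (t : ℕ∞) ≤ autK R (List.ofFn fun j : Fin k => α (i * k + j)) := by
    intro i hi
    rw [hT_def, mem_filter] at hi
    have := (mem_filter.mp hi.2).2
    exact not_lt.mp this
  have hsum1 : ((t * (∑ g ∈ Gs, alignedCount α k g N) : ℕ) : ℕ∞) ≤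
      ∑ i ∈ range N, autK R (List.ofFn fun j : Fin k => α (i * k + j)) := by
    calc ((t * (∑ g ∈ Gs, alignedCount α k g N) : ℕ) : ℕ∞)
        = ((t * T.card : ℕ) : ℕ∞) := by rw [hTcard]
      _ = T.card • (t : ℕ∞) := by rw [nsmul_eq_mul]; push_cast; ring
      _ = ∑ _i ∈ T, (t : ℕ∞) := (Finset.sum_const _).symm
      _ ≤ ∑ i ∈ T, autK R (List.ofFn fun j : Fin k => α (i * k + j)) :=
          Finset.sum_le_sum hTle
      _ ≤ ∑ i ∈ range N, autK R (List.ofFn fun j : Fin k => α (i * k + j)) :=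
          Finset.sum_le_sum_of_subset (Finset.filter_subset _ _)
  have hsum2 := sum_blocks_le hsup k N α n hNk
  have han : a * n ≤ b * (t * (∑ g ∈ Gs, alignedCount α k g N)) := by
    calc a * n ≤ a * (k * (N + 1)) := Nat.mul_le_mul_left a (le_of_lt hnlt)
      _ = a * k * (N + 1) := by ring
      _ ≤ b * t * (∑ g ∈ Gs, alignedCount α k g N) := hN₀ N hNge
      _ = b * (t * (∑ g ∈ Gs, alignedCount α k g N)) := by ring
  calc (a * n : ℕ∞) = ((a * n : ℕ) : ℕ∞) := by push_cast; ring
    _ ≤ ((b * (t * (∑ g ∈ Gs, alignedCount α k g N)) : ℕ) : ℕ∞) := Nat.cast_le.mpr han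
    _ = (b : ℕ∞) * ((t * (∑ g ∈ Gs, alignedCount α k g N) : ℕ) : ℕ∞) := by push_cast; ring
    _ ≤ (b : ℕ∞) * autK R (prefixOf α n) := mul_le_mul_right (hsum1.trans hsum2) _
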